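/- Let θ ∈ [0,π), T > 0, and M > 0. Let u : [0,T) × ℝ → ℂ be smooth, with u(t,·) and ∂ₜu(t,·) Schwartz in x for each t, set m = u − ∂ₓ²u, Q = (u + u_x)(ū − ū_x), J = Re(e^{iθ}Q), K = i Im(e^{iθ}Q) − ∂ₓJ, and suppose ∂ₜm + J ∂ₓm = K m on [0,T) × ℝ. Assume moreover that ‖m(t,·)‖_{L¹(ℝ)} ≤ M for all t ∈ [0,T). Then the pointwise inequality ∂ₜJ_x + J ∂ₓJ_x + (J_x)² ≤ 7 M³ |m| holds on [0,T) × ℝ, where J_x = ∂ₓJ and |m| is the complex modulus of m. -/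

import Mathlib

open Set MeasureTheory Complex Filter

noncomputable section

namespace Riccati

/-- derivative of a Schwartz map -/
lemma sHasDeriv (f : SchwartzMap ℝ ℂ) (y : ℝ) :
    HasDerivAt f (SchwartzMap.derivCLM ℝ ℂ f y) y := by
  rw [SchwartzMap.derivCLM_apply]
  exact (((f.smooth 1).differentiable (by norm_num)) y).hasDerivAt

lemma sDeriv_eq (f : SchwartzMap ℝ ℂ) : deriv (⇑f) = ⇑(SchwartzMap.derivCLM ℝ ℂ f) := by
  funext y; rw [SchwartzMap.derivCLM_apply]

lemma sBound (f : SchwartzMap ℝ ℂ) : ∃ C, ∀ x, ‖f x‖ ≤ C := by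
  obtain ⟨C, _, hC⟩ := f.decay 0 0
  exact ⟨C, fun x => by simpa using hC x⟩

lemma sTendsto_atTop (f : SchwartzMap ℝ ℂ) : Tendsto f atTop (nhds 0) := by
  have h := f.toZeroAtInfty.zero_at_infty'
  refine (h.mono_left ?_).congr (fun x => rfl)
  rw [cocompact_eq_atBot_atTop]
  exact le_sup_right

lemma sTendsto_atBot (f : SchwartzMap ℝ ℂ) : Tendsto f atBot (nhds 0) := by
  have h := f.toZeroAtInfty.zero_at_infty'
  refine (h.mono_left ?_).congr (fun x => rfl)
  rw [cocompact_eq_atBot_atTop]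
  exact le_sup_left

lemma exp_tendsto_top (x : ℝ) : Tendsto (fun y => Real.exp (x - y)) atTop (nhds 0) :=
  Real.tendsto_exp_atBot.comp (tendsto_neg_atTop_atBot.comp
    (tendsto_atTop_add_const_right _ (-x) tendsto_id) |>.congr (fun y => by simp [Function.comp]; ring))

lemma exp_tendsto_bot (x : ℝ) : Tendsto (fun y => Real.exp (y - x)) atBot (nhds 0) :=
  Real.tendsto_exp_atBot.comp (tendsto_atBot_add_const_right _ (-x) tendsto_id)

end Riccati

namespace Riccati

lemma ftc_Ioi {w d : ℝ → ℂ} {x : ℝ} (hd : ∀ y, HasDerivAt w (d y) y)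
    (hint : IntegrableOn d (Ioi x)) (h0 : Tendsto w atTop (nhds 0)) :
    ∫ y in Ioi x, d y = - w x := by
  simpa using MeasureTheory.integral_Ioi_of_hasDerivAt_of_tendsto'
    (fun y _ => hd y) hint h0

lemma ftc_Iic {w d : ℝ → ℂ} {x : ℝ} (hd : ∀ y, HasDerivAt w (d y) y)
    (hint : IntegrableOn d (Iic x)) (h0 : Tendsto w atBot (nhds 0)) :
    ∫ y in Iic x, d y = w x := by
  simpa using MeasureTheory.integral_Iic_of_hasDerivAt_of_tendsto'
    (fun y _ => hd y) hint h0

/-- integrability of bounded (on the set) continuous multiple of integrable function -/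
lemma intOn_mul {c F : ℝ → ℂ} {s : Set ℝ} (hs : MeasurableSet s) (hF : Integrable F)
    (hc : Continuous c) {C : ℝ} (hbdd : ∀ y ∈ s, ‖c y‖ ≤ C) :
    IntegrableOn (fun y => c y * F y) s := by
  refine Integrable.bdd_mul (c := C) (hF.restrict) (hc.aestronglyMeasurable.restrict) ?_
  exact (ae_restrict_iff' hs).2 (Eventually.of_forall hbdd)

lemma expC_hasDeriv_plus (x y : ℝ) :
    HasDerivAt (fun y => ((Real.exp (x - y) : ℝ) : ℂ)) (-((Real.exp (x - y) : ℝ) : ℂ)) y := by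
  have h : HasDerivAt (fun y : ℝ => Real.exp (x - y)) (-Real.exp (x - y)) y := by
    simpa [Function.comp_def] using (Real.hasDerivAt_exp (x - y)).comp y
      (((hasDerivAt_id y).const_sub x))
  simpa using h.ofReal_comp

lemma expC_hasDeriv_minus (x y : ℝ) :
    HasDerivAt (fun y => ((Real.exp (y - x) : ℝ) : ℂ)) (((Real.exp (y - x) : ℝ) : ℂ)) y := by
  have h : HasDerivAt (fun y : ℝ => Real.exp (y - x)) (Real.exp (y - x)) y := by
    simpa [Function.comp_def] using (Real.hasDerivAt_exp (y - x)).comp y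
      (((hasDerivAt_id y).sub_const x))
  simpa using h.ofReal_comp

end Riccati

namespace Riccati

lemma expC_cont_plus (x : ℝ) : Continuous fun y => ((Real.exp (x - y) : ℝ) : ℂ) :=
  Complex.continuous_ofReal.comp (Real.continuous_exp.comp (continuous_const.sub continuous_id))

lemma expC_cont_minus (x : ℝ) : Continuous fun y => ((Real.exp (y - x) : ℝ) : ℂ) :=
  Complex.continuous_ofReal.comp (Real.continuous_exp.comp (continuous_id.sub continuous_const))

lemma expC_bdd_plus (x : ℝ) : ∀ y ∈ Ioi x, ‖((Real.exp (x - y) : ℝ) : ℂ)‖ ≤ 1 := by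
  intro y hy
  simp only [Complex.norm_real, Real.norm_eq_abs, abs_of_pos (Real.exp_pos _)]
  exact Real.exp_le_one_iff.2 (by simp [le_of_lt (mem_Ioi.1 hy)])

lemma expC_bdd_minus (x : ℝ) : ∀ y ∈ Iic x, ‖((Real.exp (y - x) : ℝ) : ℂ)‖ ≤ 1 := by
  intro y hy
  simp only [Complex.norm_real, Real.norm_eq_abs, abs_of_pos (Real.exp_pos _)]
  exact Real.exp_le_one_iff.2 (by simp [hy.out])

lemma norm_int_le {c F : ℝ → ℂ} {s : Set ℝ} (hs : MeasurableSet s) (hF : Integrable F)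
    (hc : Continuous c) (hbdd : ∀ y ∈ s, ‖c y‖ ≤ 1) :
    ‖∫ y in s, c y * F y‖ ≤ ∫ y, ‖F y‖ := by
  refine (norm_integral_le_integral_norm _).trans ?_
  have h1 : ∫ y in s, ‖c y * F y‖ ≤ ∫ y in s, ‖F y‖ := by
    refine setIntegral_mono_on (intOn_mul hs hF hc hbdd).norm hF.norm.restrict hs ?_
    intro y hy
    rw [norm_mul]
    calc ‖c y‖ * ‖F y‖ ≤ 1 * ‖F y‖ := by
          exact mul_le_mul_of_nonneg_right (hbdd y hy) (norm_nonneg _)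
      _ = ‖F y‖ := one_mul _
  refine h1.trans (setIntegral_le_integral hF.norm ?_)
  exact Eventually.of_forall (fun y => norm_nonneg _)

end Riccati

namespace Riccati

/-- Helmholtz inversion, plus side. -/
lemma helm_plus (f : SchwartzMap ℝ ℂ) (x : ℝ) :
    ∫ y in Ioi x, ((Real.exp (x - y) : ℝ) : ℂ) * (f y - deriv (deriv (⇑f)) y)
      = f x + deriv (⇑f) x := by
  set f1 := SchwartzMap.derivCLM ℝ ℂ f with hf1
  set F2 := f - SchwartzMap.derivCLM ℝ ℂ f1 with hF2
  have hF2eq : ∀ y, f y - deriv (deriv (⇑f)) y = F2 y := by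
    intro y
    rw [sDeriv_eq f, ← hf1, SchwartzMap.sub_apply, SchwartzMap.derivCLM_apply]
  set w := fun y => ((Real.exp (x - y) : ℝ) : ℂ) * (f y + f1 y) with hw
  set d := fun y => -(((Real.exp (x - y) : ℝ) : ℂ) * F2 y) with hd
  have hder : ∀ y, HasDerivAt w (d y) y := by
    intro y
    have h := (expC_hasDeriv_plus x y).mul ((sHasDeriv f y).add (sHasDeriv f1 y))
    refine h.congr_deriv ?_
    simp only [hd, hF2, SchwartzMap.sub_apply, Pi.add_apply, Pi.sub_apply, hf1]
    ring
  have hint : IntegrableOn d (Ioi x) := by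
    exact (intOn_mul measurableSet_Ioi F2.integrable (expC_cont_plus x) (expC_bdd_plus x)).neg
  have h0 : Tendsto w atTop (nhds 0) := by
    obtain ⟨C, hC⟩ := sBound (f + f1)
    refine squeeze_zero_norm (a := fun y => Real.exp (x - y) * C) (fun y => ?_) ?_
    · have := hC y
      rw [SchwartzMap.add_apply] at this
      simp only [hw, norm_mul, Complex.norm_real, Real.norm_eq_abs,
        abs_of_pos (Real.exp_pos _)]
      exact mul_le_mul_of_nonneg_left this (le_of_lt (Real.exp_pos _))
    · simpa using (exp_tendsto_top x).mul_const C
  have key := ftc_Ioi hder hint h0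
  calc ∫ y in Ioi x, ((Real.exp (x - y) : ℝ) : ℂ) * (f y - deriv (deriv (⇑f)) y)
      = ∫ y in Ioi x, -(d y) := by
        refine setIntegral_congr_fun measurableSet_Ioi (fun y _ => ?_)
        rw [hF2eq y]; simp [hd]
    _ = -∫ y in Ioi x, d y := by rw [integral_neg]
    _ = w x := by rw [key, neg_neg]
    _ = f x + deriv (⇑f) x := by
        simp only [hw, sub_self, Real.exp_zero, Complex.ofReal_one, one_mul, hf1,
          SchwartzMap.derivCLM_apply]

/-- Helmholtz inversion, minus side. -/
lemma helm_minus (f : SchwartzMap ℝ ℂ) (x : ℝ) :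
    ∫ y in Iic x, ((Real.exp (y - x) : ℝ) : ℂ) * (f y - deriv (deriv (⇑f)) y)
      = f x - deriv (⇑f) x := by
  set f1 := SchwartzMap.derivCLM ℝ ℂ f with hf1
  set F2 := f - SchwartzMap.derivCLM ℝ ℂ f1 with hF2
  have hF2eq : ∀ y, f y - deriv (deriv (⇑f)) y = F2 y := by
    intro y
    rw [sDeriv_eq f, ← hf1, SchwartzMap.sub_apply, SchwartzMap.derivCLM_apply]
  set w := fun y => ((Real.exp (y - x) : ℝ) : ℂ) * (f y - f1 y) with hw
  set d := fun y => ((Real.exp (y - x) : ℝ) : ℂ) * F2 y with hd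
  have hder : ∀ y, HasDerivAt w (d y) y := by
    intro y
    have h := (expC_hasDeriv_minus x y).mul ((sHasDeriv f y).sub (sHasDeriv f1 y))
    refine h.congr_deriv ?_
    simp only [hd, hF2, SchwartzMap.sub_apply, Pi.add_apply, Pi.sub_apply, hf1]
    ring
  have hint : IntegrableOn d (Iic x) := by
    exact intOn_mul measurableSet_Iic F2.integrable (expC_cont_minus x) (expC_bdd_minus x)
  have h0 : Tendsto w atBot (nhds 0) := by
    obtain ⟨C, hC⟩ := sBound (f - f1)
    refine squeeze_zero_norm (a := fun y => Real.exp (y - x) * C) (fun y => ?_) ?_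
    · have := hC y
      rw [SchwartzMap.sub_apply] at this
      simp only [hw, norm_mul, Complex.norm_real, Real.norm_eq_abs,
        abs_of_pos (Real.exp_pos _)]
      exact mul_le_mul_of_nonneg_left this (le_of_lt (Real.exp_pos _))
    · simpa using (exp_tendsto_bot x).mul_const C
  have key := ftc_Iic hder hint h0
  calc ∫ y in Iic x, ((Real.exp (y - x) : ℝ) : ℂ) * (f y - deriv (deriv (⇑f)) y)
      = ∫ y in Iic x, d y := by
        refine setIntegral_congr_fun measurableSet_Iic (fun y _ => ?_)
        rw [hF2eq y]
    _ = w x := key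
    _ = f x - deriv (⇑f) x := by
        simp only [hw, sub_self, Real.exp_zero, Complex.ofReal_one, one_mul, hf1,
          SchwartzMap.derivCLM_apply]

end Riccati

namespace Riccati

variable {E : Type*} [NormedAddCommGroup E] [NormedSpace ℝ E]

/-- The space-time domain. -/
def dom (T : ℝ) : Set (ℝ × ℝ) := Ico 0 T ×ˢ (univ : Set ℝ)

lemma uniqueDiffOn_dom (T : ℝ) : UniqueDiffOn ℝ (dom T) :=
  (uniqueDiffOn_Ico 0 T).prod uniqueDiffOn_univ

lemma mem_dom {T t x : ℝ} (ht : t ∈ Ico 0 T) : (t, x) ∈ dom T := ⟨ht, mem_univ _⟩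

lemma hasDerivAt_slice_x (F : ℝ × ℝ → E) {T : ℝ}
    (hF : ∀ n : ℕ, ContDiffOn ℝ n F (dom T)) {t : ℝ} (ht : t ∈ Ico 0 T) (x : ℝ) :
    HasDerivAt (fun y => F (t, y)) (fderivWithin ℝ F (dom T) (t, x) (0, 1)) x := by
  have hdF : DifferentiableWithinAt ℝ F (dom T) (t, x) :=
    (hF 1).differentiableOn (by norm_num) _ (mem_dom ht)
  have hinner : HasDerivAt (fun y : ℝ => ((t, y) : ℝ × ℝ)) ((0 : ℝ), (1 : ℝ)) x :=
    (hasDerivAt_const x t).prodMk (hasDerivAt_id x)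
  have := hdF.hasFDerivWithinAt.comp_hasDerivWithinAt x
    (hinner.hasDerivWithinAt (s := univ)) (fun y _ => mem_dom ht)
  rw [← hasDerivWithinAt_univ]
  exact this

lemma hasDerivWithinAt_slice_t (F : ℝ × ℝ → E) {T : ℝ}
    (hF : ∀ n : ℕ, ContDiffOn ℝ n F (dom T)) {t : ℝ} (ht : t ∈ Ico 0 T) (x : ℝ) :
    HasDerivWithinAt (fun s => F (s, x)) (fderivWithin ℝ F (dom T) (t, x) (1, 0))
      (Ico 0 T) t := by
  have hdF : DifferentiableWithinAt ℝ F (dom T) (t, x) :=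
    (hF 1).differentiableOn (by norm_num) _ (mem_dom ht)
  have hinner : HasDerivWithinAt (fun s : ℝ => ((s, x) : ℝ × ℝ)) ((1 : ℝ), (0 : ℝ))
      (Ico 0 T) t :=
    ((hasDerivAt_id t).prodMk (hasDerivAt_const t x)).hasDerivWithinAt
  exact hdF.hasFDerivWithinAt.comp_hasDerivWithinAt t hinner (fun s hs => mem_dom hs)

lemma contDiffOn_fderivWithin_dom {F : ℝ × ℝ → E} {T : ℝ}
    (hF : ∀ n : ℕ, ContDiffOn ℝ n F (dom T)) (n : ℕ) :
    ContDiffOn ℝ n (fderivWithin ℝ F (dom T)) (dom T) := by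
  refine (hF (n + 1)).fderivWithin (uniqueDiffOn_dom T) ?_
  norm_cast

lemma symm_dom {F : ℝ × ℝ → E} {T : ℝ} (hT : 0 < T)
    (hF : ∀ n : ℕ, ContDiffOn ℝ n F (dom T)) {p : ℝ × ℝ} (hp : p ∈ dom T) :
    IsSymmSndFDerivWithinAt ℝ F (dom T) p := by
  refine ((hF 2) p hp).isSymmSndFDerivWithinAt (by norm_num) (uniqueDiffOn_dom T) ?_ hp
  have hint : interior (dom T) = Ioo 0 T ×ˢ (univ : Set ℝ) := by
    rw [dom, interior_prod_eq, interior_Ico, interior_univ]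
  rw [hint, closure_prod_eq, closure_Ioo hT.ne, closure_univ]
  exact ⟨⟨hp.1.1, hp.1.2.le⟩, mem_univ _⟩

/-- Mixed partials swap: the time derivative of the `x`-derivative slice. -/
lemma hasDerivWithinAt_deriv_slice {F : ℝ × ℝ → E} {T : ℝ} (hT : 0 < T)
    (hF : ∀ n : ℕ, ContDiffOn ℝ n F (dom T)) {t : ℝ} (ht : t ∈ Ico 0 T) (x : ℝ) :
    HasDerivWithinAt (fun s => deriv (fun y => F (s, y)) x)
      (deriv (fun y => fderivWithin ℝ F (dom T) (t, y) (1, 0)) x) (Ico 0 T) t := by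
  set G := fderivWithin ℝ F (dom T) with hG
  have hGsm : ∀ n : ℕ, ContDiffOn ℝ n G (dom T) := contDiffOn_fderivWithin_dom hF
  -- time derivative of s ↦ G (s,x) (0,1)
  have step1 : HasDerivWithinAt (fun s => G (s, x) (0, 1))
      ((fderivWithin ℝ G (dom T) (t, x) (1, 0)) (0, 1)) (Ico 0 T) t := by
    have h := (hasDerivWithinAt_slice_t G hGsm ht x).clm_apply
      (hasDerivWithinAt_const t (Ico 0 T) ((0 : ℝ), (1 : ℝ)))
    simpa using h
  -- symmetry
  have hsym := symm_dom hT hF (mem_dom (t := t) (x := x) ht) (1, 0) (0, 1)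
  -- identify the symmetric value with the x-derivative of the t-derivative
  have step4 : (fderivWithin ℝ G (dom T) (t, x) (0, 1)) (1, 0)
      = deriv (fun y => G (t, y) (1, 0)) x := by
    have h := (hasDerivAt_slice_x G hGsm ht x).clm_apply
      (hasDerivAt_const x ((1 : ℝ), (0 : ℝ)))
    have h' : HasDerivAt (fun y => G (t, y) (1, 0))
        ((fderivWithin ℝ G (dom T) (t, x) (0, 1)) (1, 0)) x := by simpa using h
    exact (h'.deriv).symm
  have step2 : HasDerivWithinAt (fun s => deriv (fun y => F (s, y)) x)
      ((fderivWithin ℝ G (dom T) (t, x) (1, 0)) (0, 1)) (Ico 0 T) t := by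
    refine step1.congr (fun s hs => ?_) ?_
    · exact (hasDerivAt_slice_x F hF hs x).deriv
    · exact (hasDerivAt_slice_x F hF ht x).deriv
  rw [← step4, ← hsym]
  exact step2

/-- uniqueness of the within-derivative on `Ico 0 T`. -/
lemma derivWithin_unique {f : ℝ → E} {a b : E} {t T : ℝ} (ht : t ∈ Ico 0 T)
    (ha : HasDerivWithinAt f a (Ico 0 T) t) (hb : HasDerivWithinAt f b (Ico 0 T) t) :
    a = b := by
  have hu := (uniqueDiffOn_Ico 0 T) t ht
  rw [← ha.derivWithin hu, ← hb.derivWithin hu]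

end Riccati

namespace Riccati

lemma key_algebra (a φ ψ m mx P N : ℂ) (J Jx : ℝ)
    (hJ : J = (a * φ * ψ).re)
    (hJx : Jx = (a * (φ * (starRingEnd ℂ) m - m * ψ)).re) :
    (a * ((((J : ℂ) * m - P) * (starRingEnd ℂ) m)
        + φ * (starRingEnd ℂ) ((a * φ * ψ - (J : ℂ) - (Jx : ℂ)) * m - (J : ℂ) * mx)
        - ((a * φ * ψ - (J : ℂ) - (Jx : ℂ)) * m - (J : ℂ) * mx) * ψ
        - m * (-(J : ℂ) * (starRingEnd ℂ) m + (starRingEnd ℂ) N))).re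
      + J * (a * (φ * (starRingEnd ℂ) m + m * ψ - 2 * m * (starRingEnd ℂ) m
          + φ * (starRingEnd ℂ) mx - mx * ψ)).re
      + Jx ^ 2
    = (a * φ * (starRingEnd ℂ) (a * φ * ψ) * (starRingEnd ℂ) m).re
      - (a * (a * φ * ψ) * m * ψ).re
      + 2 * J * (a * m * ψ).re
      - (a * (starRingEnd ℂ) m * P).re
      - (a * m * (starRingEnd ℂ) N).re := by
  subst hJ hJx
  simp only [Complex.mul_re, Complex.mul_im, Complex.sub_re, Complex.sub_im,
    Complex.add_re, Complex.add_im, Complex.neg_re, Complex.neg_im,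
    Complex.conj_re, Complex.conj_im, Complex.ofReal_re, Complex.ofReal_im,
    Complex.re_ofNat, Complex.im_ofNat]
  ring

end Riccati

namespace Riccati

/-! ### Slice-level objects -/

def phiF (f : SchwartzMap ℝ ℂ) : ℝ → ℂ := fun y => f y + deriv (⇑f) y
def chiF (f : SchwartzMap ℝ ℂ) : ℝ → ℂ := fun y => f y - deriv (⇑f) y
def psiF (f : SchwartzMap ℝ ℂ) : ℝ → ℂ := fun y => (starRingEnd ℂ) (chiF f y)
def mF (f : SchwartzMap ℝ ℂ) : ℝ → ℂ := fun y => f y - deriv (deriv (⇑f)) y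
def AF (a : ℂ) (f : SchwartzMap ℝ ℂ) : ℝ → ℂ := fun y => a * (phiF f y * psiF f y)
def JF (a : ℂ) (f : SchwartzMap ℝ ℂ) : ℝ → ℝ := fun y => (AF a f y).re
def JxF (a : ℂ) (f : SchwartzMap ℝ ℂ) : ℝ → ℝ := fun y =>
  (a * (phiF f y * (starRingEnd ℂ) (mF f y) - mF f y * psiF f y)).re
def mS (f : SchwartzMap ℝ ℂ) : SchwartzMap ℝ ℂ :=
  f - SchwartzMap.derivCLM ℝ ℂ (SchwartzMap.derivCLM ℝ ℂ f)
def BF (f : SchwartzMap ℝ ℂ) : ℝ := ∫ y, ‖mF f y‖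

lemma mF_eq (f : SchwartzMap ℝ ℂ) : mF f = ⇑(mS f) := by
  funext y
  rw [mF, mS, SchwartzMap.sub_apply, SchwartzMap.derivCLM_apply, sDeriv_eq f]

lemma mF_integrable (f : SchwartzMap ℝ ℂ) : Integrable (mF f) := by
  rw [mF_eq]; exact (mS f).integrable

lemma mF_cont (f : SchwartzMap ℝ ℂ) : Continuous (mF f) := by
  rw [mF_eq]; exact (mS f).continuous

lemma mF_tendsto_top (f : SchwartzMap ℝ ℂ) : Tendsto (mF f) atTop (nhds 0) := by
  rw [mF_eq]; exact sTendsto_atTop (mS f)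

lemma mF_tendsto_bot (f : SchwartzMap ℝ ℂ) : Tendsto (mF f) atBot (nhds 0) := by
  rw [mF_eq]; exact sTendsto_atBot (mS f)

lemma mF_bound (f : SchwartzMap ℝ ℂ) : ∃ C, ∀ y, ‖mF f y‖ ≤ C := by
  rw [mF_eq]; exact sBound (mS f)

lemma deriv_mF_eq (f : SchwartzMap ℝ ℂ) :
    deriv (mF f) = ⇑(SchwartzMap.derivCLM ℝ ℂ (mS f)) := by
  rw [mF_eq, sDeriv_eq]

lemma deriv_mF_integrable (f : SchwartzMap ℝ ℂ) : Integrable (deriv (mF f)) := by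
  rw [deriv_mF_eq]; exact (SchwartzMap.derivCLM ℝ ℂ (mS f)).integrable

lemma deriv_mF_cont (f : SchwartzMap ℝ ℂ) : Continuous (deriv (mF f)) := by
  rw [deriv_mF_eq]; exact (SchwartzMap.derivCLM ℝ ℂ (mS f)).continuous

/-! ### derivative facts -/

lemma f_hasDeriv (f : SchwartzMap ℝ ℂ) (y : ℝ) : HasDerivAt f (deriv (⇑f) y) y :=
  (((f.smooth 1).differentiable (by norm_num)) y).hasDerivAt

lemma derivf_hasDeriv (f : SchwartzMap ℝ ℂ) (y : ℝ) :
    HasDerivAt (deriv (⇑f)) (deriv (deriv (⇑f)) y) y := by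
  rw [sDeriv_eq f]
  exact f_hasDeriv (SchwartzMap.derivCLM ℝ ℂ f) y

lemma phiF_hasDeriv (f : SchwartzMap ℝ ℂ) (y : ℝ) :
    HasDerivAt (phiF f) (phiF f y - mF f y) y := by
  have h := (f_hasDeriv f y).add (derivf_hasDeriv f y)
  refine h.congr_deriv ?_
  simp only [phiF, mF]; ring

lemma chiF_hasDeriv (f : SchwartzMap ℝ ℂ) (y : ℝ) :
    HasDerivAt (chiF f) (mF f y - chiF f y) y := by
  have h := (f_hasDeriv f y).sub (derivf_hasDeriv f y)
  refine h.congr_deriv ?_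
  simp only [chiF, mF]; ring

lemma conj_hasDerivAt {g : ℝ → ℂ} {g' : ℂ} {y : ℝ} (h : HasDerivAt g g' y) :
    HasDerivAt (fun z => (starRingEnd ℂ) (g z)) ((starRingEnd ℂ) g') y := by
  have := ((Complex.conjCLE : ℂ ≃L[ℝ] ℂ).toContinuousLinearMap.hasFDerivAt
    (x := g y)).comp_hasDerivAt y h
  simpa [Function.comp_def] using this

lemma conj_hasDerivWithinAt {g : ℝ → ℂ} {g' : ℂ} {s : Set ℝ} {y : ℝ}
    (h : HasDerivWithinAt g g' s y) :
    HasDerivWithinAt (fun z => (starRingEnd ℂ) (g z)) ((starRingEnd ℂ) g') s y := by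
  have := ((Complex.conjCLE : ℂ ≃L[ℝ] ℂ).toContinuousLinearMap.hasFDerivAt
    (x := g y)).comp_hasDerivWithinAt y h
  simpa [Function.comp_def] using this

lemma re_hasDerivAt {g : ℝ → ℂ} {g' : ℂ} {y : ℝ} (h : HasDerivAt g g' y) :
    HasDerivAt (fun z => (g z).re) g'.re y := by
  have := (Complex.reCLM.hasFDerivAt (x := g y)).comp_hasDerivAt y h
  simpa [Function.comp_def] using this

lemma re_hasDerivWithinAt {g : ℝ → ℂ} {g' : ℂ} {s : Set ℝ} {y : ℝ}
    (h : HasDerivWithinAt g g' s y) :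
    HasDerivWithinAt (fun z => (g z).re) g'.re s y := by
  have := (Complex.reCLM.hasFDerivAt (x := g y)).comp_hasDerivWithinAt y h
  simpa [Function.comp_def] using this

lemma ofReal_hasDerivWithinAt {g : ℝ → ℝ} {g' : ℝ} {s : Set ℝ} {y : ℝ}
    (h : HasDerivWithinAt g g' s y) :
    HasDerivWithinAt (fun z => ((g z : ℝ) : ℂ)) ((g' : ℝ) : ℂ) s y := by
  have := (Complex.ofRealCLM.hasFDerivAt (x := g y)).comp_hasDerivWithinAt y h
  simpa [Function.comp_def] using this

lemma psiF_hasDeriv (f : SchwartzMap ℝ ℂ) (y : ℝ) :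
    HasDerivAt (psiF f) ((starRingEnd ℂ) (mF f y) - psiF f y) y := by
  have h := conj_hasDerivAt (chiF_hasDeriv f y)
  refine h.congr_deriv ?_
  simp only [psiF, map_sub]

lemma mF_hasDeriv (f : SchwartzMap ℝ ℂ) (y : ℝ) :
    HasDerivAt (mF f) (deriv (mF f) y) y := by
  rw [deriv_mF_eq, mF_eq]
  exact sHasDeriv (mS f) y

lemma JF_hasDeriv (a : ℂ) (f : SchwartzMap ℝ ℂ) (y : ℝ) :
    HasDerivAt (JF a f) (JxF a f y) y := by
  have h : HasDerivAt (fun z => a * (phiF f z * psiF f z))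
      (a * ((phiF f y - mF f y) * psiF f y
        + phiF f y * ((starRingEnd ℂ) (mF f y) - psiF f y))) y :=
    (((phiF_hasDeriv f y).mul (psiF_hasDeriv f y)).const_mul a)
  have h2 := re_hasDerivAt h
  refine h2.congr_deriv ?_
  rw [JxF]
  congr 1
  ring

lemma deriv_JF (a : ℂ) (f : SchwartzMap ℝ ℂ) (y : ℝ) :
    deriv (JF a f) y = JxF a f y := (JF_hasDeriv a f y).deriv

lemma JxF_hasDeriv (a : ℂ) (f : SchwartzMap ℝ ℂ) (y : ℝ) :
    HasDerivAt (JxF a f)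
      ((a * (phiF f y * (starRingEnd ℂ) (mF f y) + mF f y * psiF f y
        - 2 * mF f y * (starRingEnd ℂ) (mF f y)
        + phiF f y * (starRingEnd ℂ) (deriv (mF f) y)
        - deriv (mF f) y * psiF f y)).re) y := by
  have h : HasDerivAt (fun z => a * (phiF f z * (starRingEnd ℂ) (mF f z) - mF f z * psiF f z))
      (a * (((phiF f y - mF f y) * (starRingEnd ℂ) (mF f y)
          + phiF f y * (starRingEnd ℂ) (deriv (mF f) y))
        - (deriv (mF f) y * psiF f y
          + mF f y * ((starRingEnd ℂ) (mF f y) - psiF f y)))) y := by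
    exact ((((phiF_hasDeriv f y).mul (conj_hasDerivAt (mF_hasDeriv f y))).sub
      ((mF_hasDeriv f y).mul (psiF_hasDeriv f y))).const_mul a)
  have h2 := re_hasDerivAt h
  refine h2.congr_deriv ?_
  congr 1
  ring

end Riccati

namespace Riccati

/-! ### Bounds -/

lemma conj_eq_two_re_sub (z : ℂ) : (starRingEnd ℂ) z = 2 * (z.re : ℂ) - z := by
  apply Complex.ext <;> simp <;> ring

lemma BF_nonneg (f : SchwartzMap ℝ ℂ) : 0 ≤ BF f :=
  integral_nonneg (fun y => norm_nonneg _)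

lemma helm_plus' (f : SchwartzMap ℝ ℂ) (x : ℝ) :
    ∫ y in Ioi x, ((Real.exp (x - y) : ℝ) : ℂ) * mF f y = phiF f x := by
  simpa [mF, phiF] using helm_plus f x

lemma helm_minus' (f : SchwartzMap ℝ ℂ) (x : ℝ) :
    ∫ y in Iic x, ((Real.exp (y - x) : ℝ) : ℂ) * mF f y = chiF f x := by
  simpa [mF, chiF] using helm_minus f x

lemma phiF_le (f : SchwartzMap ℝ ℂ) (x : ℝ) : ‖phiF f x‖ ≤ BF f := by
  rw [← helm_plus']
  exact norm_int_le measurableSet_Ioi (mF_integrable f) (expC_cont_plus x) (expC_bdd_plus x)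

lemma chiF_le (f : SchwartzMap ℝ ℂ) (x : ℝ) : ‖chiF f x‖ ≤ BF f := by
  rw [← helm_minus']
  exact norm_int_le measurableSet_Iic (mF_integrable f) (expC_cont_minus x) (expC_bdd_minus x)

lemma psiF_le (f : SchwartzMap ℝ ℂ) (x : ℝ) : ‖psiF f x‖ ≤ BF f := by
  rw [psiF, RCLike.norm_conj]
  exact chiF_le f x

lemma AF_le (a : ℂ) (f : SchwartzMap ℝ ℂ) (y : ℝ) :
    ‖AF a f y‖ ≤ ‖a‖ * (BF f * BF f) := by
  rw [AF, norm_mul, norm_mul]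
  exact mul_le_mul_of_nonneg_left
    (mul_le_mul (phiF_le f y) (psiF_le f y) (norm_nonneg _) (BF_nonneg f)) (norm_nonneg a)

lemma JF_le (a : ℂ) (f : SchwartzMap ℝ ℂ) (y : ℝ) :
    |JF a f y| ≤ ‖a‖ * (BF f * BF f) :=
  (Complex.abs_re_le_norm _).trans (by exact AF_le a f y)

lemma JxF_le (a : ℂ) (f : SchwartzMap ℝ ℂ) (y : ℝ) :
    |JxF a f y| ≤ ‖a‖ * (2 * BF f * ‖mF f y‖) := by
  refine (Complex.abs_re_le_norm _).trans ?_
  rw [norm_mul]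
  refine mul_le_mul_of_nonneg_left ?_ (norm_nonneg a)
  refine (norm_sub_le _ _).trans ?_
  rw [norm_mul, norm_mul, RCLike.norm_conj]
  have h1 : ‖phiF f y‖ * ‖mF f y‖ ≤ BF f * ‖mF f y‖ :=
    mul_le_mul_of_nonneg_right (phiF_le f y) (norm_nonneg _)
  have h2 : ‖mF f y‖ * ‖psiF f y‖ ≤ ‖mF f y‖ * BF f :=
    mul_le_mul_of_nonneg_left (psiF_le f y) (norm_nonneg _)
  nlinarith [norm_nonneg (mF f y), BF_nonneg f]

/-! ### Continuity -/

lemma phiF_cont (f : SchwartzMap ℝ ℂ) : Continuous (phiF f) := by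
  unfold phiF
  rw [sDeriv_eq f]
  exact f.continuous.add (SchwartzMap.derivCLM ℝ ℂ f).continuous

lemma chiF_cont (f : SchwartzMap ℝ ℂ) : Continuous (chiF f) := by
  unfold chiF
  rw [sDeriv_eq f]
  exact f.continuous.sub (SchwartzMap.derivCLM ℝ ℂ f).continuous

lemma psiF_cont (f : SchwartzMap ℝ ℂ) : Continuous (psiF f) :=
  Complex.continuous_conj.comp (chiF_cont f)

lemma AF_cont (a : ℂ) (f : SchwartzMap ℝ ℂ) : Continuous (AF a f) :=
  continuous_const.mul ((phiF_cont f).mul (psiF_cont f))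

lemma JF_cont (a : ℂ) (f : SchwartzMap ℝ ℂ) : Continuous (JF a f) :=
  Complex.continuous_re.comp (AF_cont a f)

lemma JxF_cont (a : ℂ) (f : SchwartzMap ℝ ℂ) : Continuous (JxF a f) :=
  Complex.continuous_re.comp (continuous_const.mul
    (((phiF_cont f).mul (Complex.continuous_conj.comp (mF_cont f))).sub
      ((mF_cont f).mul (psiF_cont f))))

end Riccati

namespace Riccati

/-! ### Integration by parts -/

lemma ibp_plus (a : ℂ) (f : SchwartzMap ℝ ℂ) (mt : ℝ → ℂ)
    (hmt : ∀ y, mt y = (AF a f y - ((JF a f y : ℝ) : ℂ) - ((JxF a f y : ℝ) : ℂ)) * mF f y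
      - ((JF a f y : ℝ) : ℂ) * deriv (mF f) y) (x : ℝ) :
    ∫ y in Ioi x, ((Real.exp (x - y) : ℝ) : ℂ) * mt y
      = ((JF a f x : ℝ) : ℂ) * mF f x
        - ∫ y in Ioi x, ((Real.exp (x - y) : ℝ) : ℂ)
            * ((starRingEnd ℂ) (AF a f y) * mF f y) := by
  obtain ⟨Cm, hCm⟩ := mF_bound f
  have hCm0 : 0 ≤ Cm := le_trans (norm_nonneg _) (hCm 0)
  set CJ := ‖a‖ * (BF f * BF f) with hCJdef
  have hCJ0 : 0 ≤ CJ := mul_nonneg (norm_nonneg a) (mul_nonneg (BF_nonneg f) (BF_nonneg f))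
  set e := fun y => ((Real.exp (x - y) : ℝ) : ℂ) with he
  set h := fun y => e y * (((JF a f y : ℝ) : ℂ) * mF f y) with hh
  set G := fun y => (((JxF a f y : ℝ) : ℂ) - ((JF a f y : ℝ) : ℂ)) * mF f y
    + ((JF a f y : ℝ) : ℂ) * deriv (mF f) y with hG
  set d := fun y => e y * G y with hd
  have hder : ∀ y, HasDerivAt h (d y) y := by
    intro y
    have h1 := (expC_hasDeriv_plus x y).mul
      (((JF_hasDeriv a f y).ofReal_comp).mul (mF_hasDeriv f y))
    refine h1.congr_deriv ?_
    simp only [hd, hG, he, Pi.mul_apply]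
    ring
  have hGint : Integrable G := by
    have h1 : Integrable (fun y => (((JxF a f y : ℝ) : ℂ) - ((JF a f y : ℝ) : ℂ)) * mF f y) := by
      refine Integrable.bdd_mul (c := ‖a‖ * (2 * BF f * Cm) + CJ) (mF_integrable f)
        ((Complex.continuous_ofReal.comp (JxF_cont a f)).sub
          (Complex.continuous_ofReal.comp (JF_cont a f))).aestronglyMeasurable ?_
      refine ae_of_all _ (fun y => ?_)
      refine (norm_sub_le _ _).trans (add_le_add ?_ ?_)
      · rw [Complex.norm_real, Real.norm_eq_abs]
        refine (JxF_le a f y).trans ?_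
        refine mul_le_mul_of_nonneg_left ?_ (norm_nonneg a)
        exact mul_le_mul_of_nonneg_left (hCm y) (by nlinarith [BF_nonneg f])
      · rw [Complex.norm_real, Real.norm_eq_abs]
        exact JF_le a f y
    have h2 : Integrable (fun y => ((JF a f y : ℝ) : ℂ) * deriv (mF f) y) := by
      refine Integrable.bdd_mul (c := CJ) (deriv_mF_integrable f)
        (Complex.continuous_ofReal.comp (JF_cont a f)).aestronglyMeasurable ?_
      refine ae_of_all _ (fun y => ?_)
      rw [Complex.norm_real, Real.norm_eq_abs]
      exact JF_le a f y
    exact h1.add h2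
  have hint : IntegrableOn d (Ioi x) := by
    have := intOn_mul (C := 1) measurableSet_Ioi hGint (expC_cont_plus x) (expC_bdd_plus x)
    exact this
  have h0 : Tendsto h atTop (nhds 0) := by
    refine squeeze_zero_norm' (a := fun y => CJ * ‖mF f y‖) ?_ ?_
    · filter_upwards [Filter.eventually_ge_atTop x] with y hy
      simp only [hh, norm_mul, he, Complex.norm_real, Real.norm_eq_abs,
        abs_of_pos (Real.exp_pos _)]
      have he1 : Real.exp (x - y) ≤ 1 := Real.exp_le_one_iff.2 (by linarith)
      have hJ := JF_le a f y
      calc Real.exp (x - y) * (|JF a f y| * ‖mF f y‖) ≤ 1 * (CJ * ‖mF f y‖) := by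
            refine mul_le_mul he1 ?_ (by positivity) zero_le_one
            exact mul_le_mul_of_nonneg_right hJ (norm_nonneg _)
        _ = CJ * ‖mF f y‖ := one_mul _
    · simpa using ((mF_tendsto_top f).norm.const_mul CJ)
  have key := ftc_Ioi hder hint h0
  have hAm_int : Integrable (fun y => (starRingEnd ℂ) (AF a f y) * mF f y) := by
    refine Integrable.bdd_mul (c := CJ) (mF_integrable f)
      (Complex.continuous_conj.comp (AF_cont a f)).aestronglyMeasurable ?_
    exact ae_of_all _ (fun y => by rw [RCLike.norm_conj]; exact AF_le a f y)
  have hAint : IntegrableOn (fun y => e y * ((starRingEnd ℂ) (AF a f y) * mF f y)) (Ioi x) :=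
    intOn_mul (C := 1) measurableSet_Ioi hAm_int (expC_cont_plus x) (expC_bdd_plus x)
  calc ∫ y in Ioi x, e y * mt y
      = ∫ y in Ioi x, (-(e y * ((starRingEnd ℂ) (AF a f y) * mF f y)) - d y) := by
        refine setIntegral_congr_fun measurableSet_Ioi (fun y _ => ?_)
        rw [hmt y, conj_eq_two_re_sub (AF a f y)]
        simp only [hd, hG]
        have hre : (AF a f y).re = JF a f y := rfl
        rw [hre]
        ring
    _ = (∫ y in Ioi x, -(e y * ((starRingEnd ℂ) (AF a f y) * mF f y)))
        - ∫ y in Ioi x, d y := integral_sub hAint.neg hint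
    _ = -(∫ y in Ioi x, e y * ((starRingEnd ℂ) (AF a f y) * mF f y)) - (- h x) := by
        rw [integral_neg, key]
    _ = ((JF a f x : ℝ) : ℂ) * mF f x
        - ∫ y in Ioi x, e y * ((starRingEnd ℂ) (AF a f y) * mF f y) := by
        simp only [hh, he, sub_self, Real.exp_zero, Complex.ofReal_one, one_mul]
        ring

lemma ibp_minus (a : ℂ) (f : SchwartzMap ℝ ℂ) (mt : ℝ → ℂ)
    (hmt : ∀ y, mt y = (AF a f y - ((JF a f y : ℝ) : ℂ) - ((JxF a f y : ℝ) : ℂ)) * mF f y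
      - ((JF a f y : ℝ) : ℂ) * deriv (mF f) y) (x : ℝ) :
    ∫ y in Iic x, ((Real.exp (y - x) : ℝ) : ℂ) * mt y
      = -(((JF a f x : ℝ) : ℂ) * mF f x)
        + ∫ y in Iic x, ((Real.exp (y - x) : ℝ) : ℂ) * (AF a f y * mF f y) := by
  obtain ⟨Cm, hCm⟩ := mF_bound f
  have hCm0 : 0 ≤ Cm := le_trans (norm_nonneg _) (hCm 0)
  set CJ := ‖a‖ * (BF f * BF f) with hCJdef
  have hCJ0 : 0 ≤ CJ := mul_nonneg (norm_nonneg a) (mul_nonneg (BF_nonneg f) (BF_nonneg f))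
  set e := fun y => ((Real.exp (y - x) : ℝ) : ℂ) with he
  set h := fun y => e y * (((JF a f y : ℝ) : ℂ) * mF f y) with hh
  set G := fun y => (((JxF a f y : ℝ) : ℂ) + ((JF a f y : ℝ) : ℂ)) * mF f y
    + ((JF a f y : ℝ) : ℂ) * deriv (mF f) y with hG
  set d := fun y => e y * G y with hd
  have hder : ∀ y, HasDerivAt h (d y) y := by
    intro y
    have h1 := (expC_hasDeriv_minus x y).mul
      (((JF_hasDeriv a f y).ofReal_comp).mul (mF_hasDeriv f y))
    refine h1.congr_deriv ?_
    simp only [hd, hG, he, Pi.mul_apply]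
    ring
  have hGint : Integrable G := by
    have h1 : Integrable (fun y => (((JxF a f y : ℝ) : ℂ) + ((JF a f y : ℝ) : ℂ)) * mF f y) := by
      refine Integrable.bdd_mul (c := ‖a‖ * (2 * BF f * Cm) + CJ) (mF_integrable f)
        ((Complex.continuous_ofReal.comp (JxF_cont a f)).add
          (Complex.continuous_ofReal.comp (JF_cont a f))).aestronglyMeasurable ?_
      refine ae_of_all _ (fun y => ?_)
      refine (norm_add_le _ _).trans (add_le_add ?_ ?_)
      · rw [Complex.norm_real, Real.norm_eq_abs]
        refine (JxF_le a f y).trans ?_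
        refine mul_le_mul_of_nonneg_left ?_ (norm_nonneg a)
        exact mul_le_mul_of_nonneg_left (hCm y) (by nlinarith [BF_nonneg f])
      · rw [Complex.norm_real, Real.norm_eq_abs]
        exact JF_le a f y
    have h2 : Integrable (fun y => ((JF a f y : ℝ) : ℂ) * deriv (mF f) y) := by
      refine Integrable.bdd_mul (c := CJ) (deriv_mF_integrable f)
        (Complex.continuous_ofReal.comp (JF_cont a f)).aestronglyMeasurable ?_
      refine ae_of_all _ (fun y => ?_)
      rw [Complex.norm_real, Real.norm_eq_abs]
      exact JF_le a f y
    exact h1.add h2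
  have hint : IntegrableOn d (Iic x) :=
    intOn_mul (C := 1) measurableSet_Iic hGint (expC_cont_minus x) (expC_bdd_minus x)
  have h0 : Tendsto h atBot (nhds 0) := by
    refine squeeze_zero_norm' (a := fun y => CJ * ‖mF f y‖) ?_ ?_
    · filter_upwards [Filter.eventually_le_atBot x] with y hy
      simp only [hh, norm_mul, he, Complex.norm_real, Real.norm_eq_abs,
        abs_of_pos (Real.exp_pos _)]
      have he1 : Real.exp (y - x) ≤ 1 := Real.exp_le_one_iff.2 (by linarith)
      have hJ := JF_le a f y
      calc Real.exp (y - x) * (|JF a f y| * ‖mF f y‖) ≤ 1 * (CJ * ‖mF f y‖) := by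
            refine mul_le_mul he1 ?_ (by positivity) zero_le_one
            exact mul_le_mul_of_nonneg_right hJ (norm_nonneg _)
        _ = CJ * ‖mF f y‖ := one_mul _
    · simpa using ((mF_tendsto_bot f).norm.const_mul CJ)
  have key := ftc_Iic hder hint h0
  have hAm_int : Integrable (fun y => AF a f y * mF f y) := by
    refine Integrable.bdd_mul (c := CJ) (mF_integrable f)
      (AF_cont a f).aestronglyMeasurable ?_
    exact ae_of_all _ (fun y => AF_le a f y)
  have hAint : IntegrableOn (fun y => e y * (AF a f y * mF f y)) (Iic x) :=
    intOn_mul (C := 1) measurableSet_Iic hAm_int (expC_cont_minus x) (expC_bdd_minus x)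
  calc ∫ y in Iic x, e y * mt y
      = ∫ y in Iic x, (e y * (AF a f y * mF f y) - d y) := by
        refine setIntegral_congr_fun measurableSet_Iic (fun y _ => ?_)
        rw [hmt y]
        simp only [hd, hG]
        have hre : (AF a f y).re = JF a f y := rfl
        ring
    _ = (∫ y in Iic x, e y * (AF a f y * mF f y)) - ∫ y in Iic x, d y :=
        integral_sub hAint hint
    _ = -(((JF a f x : ℝ) : ℂ) * mF f x)
        + ∫ y in Iic x, e y * (AF a f y * mF f y) := by
        rw [key]
        simp only [hh, he, sub_self, Real.exp_zero, Complex.ofReal_one, one_mul]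
        ring

end Riccati

namespace Riccati

lemma AFm_conj_integrable (a : ℂ) (f : SchwartzMap ℝ ℂ) :
    Integrable (fun y => (starRingEnd ℂ) (AF a f y) * mF f y) := by
  refine Integrable.bdd_mul (c := ‖a‖ * (BF f * BF f)) (mF_integrable f)
    (Complex.continuous_conj.comp (AF_cont a f)).aestronglyMeasurable ?_
  exact ae_of_all _ (fun y => by rw [RCLike.norm_conj]; exact AF_le a f y)

lemma AFm_integrable (a : ℂ) (f : SchwartzMap ℝ ℂ) :
    Integrable (fun y => AF a f y * mF f y) := by
  refine Integrable.bdd_mul (c := ‖a‖ * (BF f * BF f)) (mF_integrable f)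
    (AF_cont a f).aestronglyMeasurable ?_
  exact ae_of_all _ (fun y => AF_le a f y)

lemma int_AFm_le {g : ℝ → ℂ} (a : ℂ) (f : SchwartzMap ℝ ℂ)
    (hg : Integrable g) (hgle : ∀ y, ‖g y‖ ≤ ‖a‖ * (BF f * BF f) * ‖mF f y‖) :
    ∫ y, ‖g y‖ ≤ ‖a‖ * (BF f * BF f) * BF f := by
  calc ∫ y, ‖g y‖ ≤ ∫ y, ‖a‖ * (BF f * BF f) * ‖mF f y‖ :=
        integral_mono hg.norm (((mF_integrable f).norm.const_mul _)) hgle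
    _ = ‖a‖ * (BF f * BF f) * BF f := by rw [integral_const_mul]; rfl

lemma P_le (a : ℂ) (f : SchwartzMap ℝ ℂ) (x : ℝ) :
    ‖∫ y in Ioi x, ((Real.exp (x - y) : ℝ) : ℂ) * ((starRingEnd ℂ) (AF a f y) * mF f y)‖
      ≤ ‖a‖ * (BF f * BF f) * BF f := by
  refine (norm_int_le measurableSet_Ioi (AFm_conj_integrable a f)
    (expC_cont_plus x) (expC_bdd_plus x)).trans ?_
  refine int_AFm_le a f (AFm_conj_integrable a f) (fun y => ?_)
  rw [norm_mul, RCLike.norm_conj]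
  exact mul_le_mul_of_nonneg_right (AF_le a f y) (norm_nonneg _)

lemma N_le (a : ℂ) (f : SchwartzMap ℝ ℂ) (x : ℝ) :
    ‖∫ y in Iic x, ((Real.exp (y - x) : ℝ) : ℂ) * (AF a f y * mF f y)‖
      ≤ ‖a‖ * (BF f * BF f) * BF f := by
  refine (norm_int_le measurableSet_Iic (AFm_integrable a f)
    (expC_cont_minus x) (expC_bdd_minus x)).trans ?_
  refine int_AFm_le a f (AFm_integrable a f) (fun y => ?_)
  rw [norm_mul]
  exact mul_le_mul_of_nonneg_right (AF_le a f y) (norm_nonneg _)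

end Riccati

namespace Riccati

lemma I_mul_im (z : ℂ) : Complex.I * ((z.im : ℝ) : ℂ) = z - ((z.re : ℝ) : ℂ) := by
  apply Complex.ext <;> simp

end Riccati

open Riccati in
theorem riccati_pointwise_estimate
    (θ T M : ℝ) (hθ : θ ∈ Ico 0 Real.pi) (hT : 0 < T) (hMpos : 0 < M)
    (u ut ux m mt : ℝ → ℝ → ℂ) (Q : ℝ → ℝ → ℂ) (J Jx : ℝ → ℝ → ℝ) (K : ℝ → ℝ → ℂ)
    (hsmooth : ∀ n : ℕ, ContDiffOn ℝ n (Function.uncurry u) (Ico 0 T ×ˢ univ))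
    (hSch : ∀ t ∈ Ico (0:ℝ) T, ∃ f : SchwartzMap ℝ ℂ, ∀ x, f x = u t x)
    (hut : ∀ t ∈ Ico (0:ℝ) T, ∀ x : ℝ,
      HasDerivWithinAt (fun s => u s x) (ut t x) (Ico 0 T) t)
    (hSch' : ∀ t ∈ Ico (0:ℝ) T, ∃ f : SchwartzMap ℝ ℂ, ∀ x, f x = ut t x)
    (hux : ∀ t x, ux t x = deriv (fun y => u t y) x)
    (hm : ∀ t x, m t x = u t x - deriv (fun y => deriv (fun z => u t z) y) x)
    (hQ : ∀ t x, Q t x = (u t x + ux t x) * (starRingEnd ℂ (u t x) - starRingEnd ℂ (ux t x)))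
    (hJ : ∀ t x, J t x = (Complex.exp (θ * Complex.I) * Q t x).re)
    (hJx : ∀ t x, Jx t x = deriv (fun y => J t y) x)
    (hK : ∀ t x, K t x = Complex.I * (((Complex.exp (θ * Complex.I) * Q t x).im : ℝ) : ℂ)
      - ((Jx t x : ℝ) : ℂ))
    (hmt : ∀ t ∈ Ico (0:ℝ) T, ∀ x : ℝ,
      HasDerivWithinAt (fun s => m s x) (mt t x) (Ico 0 T) t)
    (heq : ∀ t ∈ Ico (0:ℝ) T, ∀ x : ℝ,
      mt t x + ((J t x : ℝ) : ℂ) * deriv (fun y => m t y) x = K t x * m t x)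
    (hM : ∀ t ∈ Ico (0:ℝ) T, ∫ y : ℝ, ‖m t y‖ ≤ M) :
    ∀ t ∈ Ico (0:ℝ) T, ∀ x : ℝ,
      derivWithin (fun s => Jx s x) (Ico 0 T) t
          + J t x * deriv (fun y => Jx t y) x + (Jx t x) ^ 2
        ≤ 7 * M ^ 3 * ‖m t x‖ := by
  intro t ht x
  set a := Complex.exp ((θ : ℂ) * Complex.I) with hadef
  have ha : ‖a‖ = 1 := by
    rw [hadef]
    exact Complex.norm_exp_ofReal_mul_I θ
  set F := Function.uncurry u with hFdef
  have hsm : ∀ n : ℕ, ContDiffOn ℝ n F (dom T) := hsmooth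
  -- slice transfer
  have slice : ∀ s : ℝ, ∀ f : SchwartzMap ℝ ℂ, (∀ y, (f : ℝ → ℂ) y = u s y) →
      (∀ y, u s y + ux s y = phiF f y) ∧
      (∀ y, m s y = mF f y) ∧
      (∀ y, a * Q s y = AF a f y) ∧
      (∀ y, J s y = JF a f y) ∧
      (∀ y, Jx s y = JxF a f y) ∧
      (∀ y, deriv (fun z => m s z) y = deriv (mF f) y) ∧
      (∀ y, (starRingEnd ℂ) (u s y) - (starRingEnd ℂ) (ux s y) = psiF f y) := by
    intro s f hfu0
    have hfu : (fun y => u s y) = ⇑f := funext fun y => (hfu0 y).symm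
    have hux' : ∀ y, ux s y = deriv (⇑f) y := fun y => by rw [hux s y, hfu]
    have hφ : ∀ y, u s y + ux s y = phiF f y := fun y => by
      rw [← hfu0 y, hux' y]; rfl
    have hm' : ∀ y, m s y = mF f y := fun y => by
      rw [hm s y, hfu, ← hfu0 y]; rfl
    have hψ : ∀ y, (starRingEnd ℂ) (u s y) - (starRingEnd ℂ) (ux s y) = psiF f y := fun y => by
      rw [← hfu0 y, hux' y, psiF, chiF, map_sub]
    have hA : ∀ y, a * Q s y = AF a f y := fun y => by
      rw [hQ s y, AF, ← hφ y, ← hψ y]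
    have hJ' : ∀ y, J s y = JF a f y := fun y => by
      rw [hJ s y, JF, ← hA y, hadef]
    have hJx' : ∀ y, Jx s y = JxF a f y := fun y => by
      rw [hJx s y, show (fun z => J s z) = JF a f from funext hJ', deriv_JF]
    have hmx : ∀ y, deriv (fun z => m s z) y = deriv (mF f) y := fun y => by
      rw [show (fun z => m s z) = mF f from funext hm']
    exact ⟨hφ, hm', hA, hJ', hJx', hmx, hψ⟩
  obtain ⟨f, hf⟩ := hSch t ht
  obtain ⟨g, hg⟩ := hSch' t ht
  obtain ⟨slφ, slm, slA, slJ, slJx, slmx, slψ⟩ := slice t f hf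
  -- L¹ bound
  have hB : BF f ≤ M := by
    have h1 : (fun y => ‖mF f y‖) = fun y => ‖m t y‖ := funext fun y => by rw [slm y]
    rw [BF, h1]
    exact hM t ht
  have hB0 : 0 ≤ BF f := BF_nonneg f
  -- time derivative identifications
  have tslice : ∀ s ∈ Ico (0:ℝ) T, ∀ y : ℝ,
      fderivWithin ℝ F (dom T) (s, y) (1, 0) = ut s y := by
    intro s hs y
    exact derivWithin_unique hs (hasDerivWithinAt_slice_t F hsm hs y) (hut s hs y)
  have hux_t : HasDerivWithinAt (fun s => ux s x) (deriv (⇑g) x) (Ico 0 T) t := by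
    have h := hasDerivWithinAt_deriv_slice hT hsm ht x
    have hval : (fun y => fderivWithin ℝ F (dom T) (t, y) (1, 0)) = ⇑g := by
      funext y
      rw [tslice t ht y, ← hg y]
    rw [hval] at h
    have hfun : (fun s => ux s x) = (fun s => deriv (fun y => F (s, y)) x) :=
      funext fun s => hux s x
    rw [hfun]
    exact h
  -- the first spatial derivative as a jointly smooth function
  set V : ℝ × ℝ → ℂ := fun p => deriv (fun z => u p.1 z) p.2 with hVdef
  have hVsm : ∀ n : ℕ, ContDiffOn ℝ n V (dom T) := by
    intro n
    have h1 : ContDiffOn ℝ n (fun p => fderivWithin ℝ F (dom T) p (0, 1)) (dom T) :=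
      (contDiffOn_fderivWithin_dom hsm n).clm_apply contDiffOn_const
    refine h1.congr ?_
    rintro ⟨s, y⟩ hp
    exact (hasDerivAt_slice_x F hsm (hp.1 : s ∈ Ico 0 T) y).deriv
  have tsliceV : ∀ y : ℝ, fderivWithin ℝ V (dom T) (t, y) (1, 0) = deriv (⇑g) y := by
    intro y
    have h1 := hasDerivWithinAt_slice_t V hVsm ht y
    have h2 := hasDerivWithinAt_deriv_slice hT hsm ht y
    have h3 := derivWithin_unique ht h1 h2
    rw [h3]
    congr 1
    funext z
    rw [tslice t ht z, ← hg z]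
  have hmt_eq : ∀ y : ℝ, mt t y = g y - deriv (deriv (⇑g)) y := by
    intro y
    have hW2 : HasDerivWithinAt (fun s => deriv (fun y' => V (s, y')) y)
        (deriv (deriv (⇑g)) y) (Ico 0 T) t := by
      have h := hasDerivWithinAt_deriv_slice hT hVsm ht y
      have hval : (fun z => fderivWithin ℝ V (dom T) (t, z) (1, 0)) = deriv (⇑g) := by
        funext z
        exact tsliceV z
      rwa [hval] at h
    have hm_t : HasDerivWithinAt (fun s => m s y) ((g y : ℂ) - deriv (deriv (⇑g)) y)
        (Ico 0 T) t := by
      have h := (hut t ht y).sub hW2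
      rw [← hg y] at h
      refine h.congr (fun s _ => ?_) ?_
      · exact hm s y
      · exact hm t y
    exact derivWithin_unique ht (hmt t ht y) hm_t
  -- PDE in slice form
  have hmtf : ∀ y, mt t y = (AF a f y - ((JF a f y : ℝ) : ℂ) - ((JxF a f y : ℝ) : ℂ)) * mF f y
      - ((JF a f y : ℝ) : ℂ) * deriv (mF f) y := by
    intro y
    have h := heq t ht y
    rw [hK t y, slA y, slJ y, slJx y, slmx y, slm y, Riccati.I_mul_im (AF a f y)] at h
    have hre : (((AF a f y).re : ℝ) : ℂ) = ((JF a f y : ℝ) : ℂ) := rfl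
    rw [hre] at h
    linear_combination h
  -- nonlocal terms
  set P := ∫ y in Ioi x, ((Real.exp (x - y) : ℝ) : ℂ)
      * ((starRingEnd ℂ) (AF a f y) * mF f y) with hPdef
  set N := ∫ y in Iic x, ((Real.exp (y - x) : ℝ) : ℂ) * (AF a f y * mF f y) with hNdef
  have hPhit : (g x : ℂ) + deriv (⇑g) x = ((JF a f x : ℝ) : ℂ) * mF f x - P := by
    calc (g x : ℂ) + deriv (⇑g) x
        = ∫ y in Ioi x, ((Real.exp (x - y) : ℝ) : ℂ) * (g y - deriv (deriv (⇑g)) y) :=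
          (helm_plus g x).symm
      _ = ∫ y in Ioi x, ((Real.exp (x - y) : ℝ) : ℂ) * mt t y := by
          refine setIntegral_congr_fun measurableSet_Ioi (fun y _ => ?_)
          rw [hmt_eq y]
      _ = ((JF a f x : ℝ) : ℂ) * mF f x - P := by
          rw [ibp_plus a f (mt t) hmtf x, ← hPdef]
  have hChit : (g x : ℂ) - deriv (⇑g) x = -(((JF a f x : ℝ) : ℂ) * mF f x) + N := by
    calc (g x : ℂ) - deriv (⇑g) x
        = ∫ y in Iic x, ((Real.exp (y - x) : ℝ) : ℂ) * (g y - deriv (deriv (⇑g)) y) :=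
          (helm_minus g x).symm
      _ = ∫ y in Iic x, ((Real.exp (y - x) : ℝ) : ℂ) * mt t y := by
          refine setIntegral_congr_fun measurableSet_Iic (fun y _ => ?_)
          rw [hmt_eq y]
      _ = -(((JF a f x : ℝ) : ℂ) * mF f x) + N := by
          rw [ibp_minus a f (mt t) hmtf x, ← hNdef]
  -- time derivative of Jx
  have hD : derivWithin (fun s => Jx s x) (Ico 0 T) t
      = (a * (((g x : ℂ) + deriv (⇑g) x) * (starRingEnd ℂ) (mF f x)
          + phiF f x * (starRingEnd ℂ) (mt t x)
          - mt t x * psiF f x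
          - mF f x * (starRingEnd ℂ) ((g x : ℂ) - deriv (⇑g) x))).re := by
    have hu_t : HasDerivWithinAt (fun s => u s x) ((g x : ℂ)) (Ico 0 T) t := by
      rw [hg x]; exact hut t ht x
    have hφ_t := hu_t.add hux_t
    have hm_t := hmt t ht x
    have hconjm := conj_hasDerivWithinAt hm_t
    have hψ_t := (conj_hasDerivWithinAt hu_t).sub (conj_hasDerivWithinAt hux_t)
    have hc := (((hφ_t.mul hconjm).sub (hm_t.mul hψ_t)).const_mul a)
    have hre := re_hasDerivWithinAt hc
    -- identify the function with s ↦ Jx s x on the set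
    have hcongr : HasDerivWithinAt (fun s => Jx s x)
        ((a * (((g x : ℂ) + deriv (⇑g) x) * (starRingEnd ℂ) (m t x)
          + (u t x + ux t x) * (starRingEnd ℂ) (mt t x)
          - (mt t x * ((starRingEnd ℂ) (u t x) - (starRingEnd ℂ) (ux t x))
            + m t x * ((starRingEnd ℂ) (g x : ℂ) - (starRingEnd ℂ) (deriv (⇑g) x))))).re)
        (Ico 0 T) t := by
      refine hre.congr (fun s hs => ?_) ?_
      · obtain ⟨fs, hfs⟩ := hSch s hs
        obtain ⟨slφ', slm', _, _, slJx', _, slψ'⟩ := slice s fs hfs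
        rw [slJx' x, JxF, ← slφ' x, ← slm' x, ← slψ' x]
        rfl
      · obtain ⟨fs, hfs⟩ := hSch t ht
        obtain ⟨slφ', slm', _, _, slJx', _, slψ'⟩ := slice t fs hfs
        rw [slJx' x, JxF, ← slφ' x, ← slm' x, ← slψ' x]
        rfl
    rw [hcongr.derivWithin ((uniqueDiffOn_Ico 0 T) t ht)]
    congr 1
    rw [← slm x, ← slφ x, ← slψ x, map_sub]
    ring
  -- final assembly
  have hfunJx : (fun y => Jx t y) = JxF a f := funext slJx
  have hderiv2 : deriv (fun y => Jx t y) x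
      = (a * (phiF f x * (starRingEnd ℂ) (mF f x) + mF f x * psiF f x
        - 2 * mF f x * (starRingEnd ℂ) (mF f x)
        + phiF f x * (starRingEnd ℂ) (deriv (mF f) x)
        - deriv (mF f) x * psiF f x)).re := by
    rw [hfunJx]
    exact (JxF_hasDeriv a f x).deriv
  have hJv : JF a f x = (a * phiF f x * psiF f x).re := by
    rw [JF, AF, mul_assoc]
  have hJxv : JxF a f x = (a * (phiF f x * (starRingEnd ℂ) (mF f x)
      - mF f x * psiF f x)).re := rfl
  have hkey := key_algebra a (phiF f x) (psiF f x) (mF f x) (deriv (mF f) x) P N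
    (JF a f x) (JxF a f x) hJv hJxv
  have hAFx : AF a f x = a * phiF f x * psiF f x := by rw [AF, mul_assoc]
  have hE : derivWithin (fun s => Jx s x) (Ico 0 T) t
      + J t x * deriv (fun y => Jx t y) x + Jx t x ^ 2
      = (a * phiF f x * (starRingEnd ℂ) (a * phiF f x * psiF f x)
          * (starRingEnd ℂ) (mF f x)).re
        - (a * (a * phiF f x * psiF f x) * mF f x * psiF f x).re
        + 2 * JF a f x * (a * mF f x * psiF f x).re
        - (a * (starRingEnd ℂ) (mF f x) * P).re
        - (a * mF f x * (starRingEnd ℂ) N).re := by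
    rw [hD, hderiv2, slJ x, slJx x, hmtf x, hPhit, hChit, hAFx, ← hkey]
    congr 2
    refine congrArg Complex.re ?_
    refine congrArg (fun z => a * z) ?_
    simp only [map_sub, map_add, map_neg, map_mul, Complex.conj_ofReal]
    ring
  have reLe : ∀ z : ℂ, z.re ≤ ‖z‖ := fun z => by
    exact Complex.re_le_norm z
  have negreLe : ∀ z : ℂ, -z.re ≤ ‖z‖ := fun z => by
    have := (abs_le.1 (Complex.abs_re_le_norm z)).1
    linarith
  have absreLe : ∀ z : ℂ, |z.re| ≤ ‖z‖ := fun z => by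
    exact Complex.abs_re_le_norm z
  have hφM : ‖phiF f x‖ ≤ M := (phiF_le f x).trans hB
  have hψM : ‖psiF f x‖ ≤ M := (psiF_le f x).trans hB
  have hAM : ‖a * phiF f x * psiF f x‖ ≤ M * M := by
    rw [norm_mul, norm_mul, ha, one_mul]
    exact mul_le_mul hφM hψM (norm_nonneg _) hMpos.le
  have hJM : |JF a f x| ≤ M * M := by
    refine (JF_le a f x).trans ?_
    rw [ha, one_mul]
    exact mul_le_mul hB hB hB0 hMpos.le
  have hBBB : BF f * BF f * BF f ≤ M * M * M := by
    refine mul_le_mul (mul_le_mul hB hB hB0 hMpos.le) hB hB0 (by positivity)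
  have hPM : ‖P‖ ≤ M * M * M := by
    refine (P_le a f x).trans ?_
    rw [ha, one_mul]
    exact hBBB
  have hNM : ‖N‖ ≤ M * M * M := by
    refine (N_le a f x).trans ?_
    rw [ha, one_mul]
    exact hBBB
  have hmnn : (0:ℝ) ≤ ‖mF f x‖ := norm_nonneg _
  have b1 : (a * phiF f x * (starRingEnd ℂ) (a * phiF f x * psiF f x)
      * (starRingEnd ℂ) (mF f x)).re ≤ M ^ 3 * ‖mF f x‖ := by
    refine (reLe _).trans ?_
    rw [norm_mul, norm_mul, norm_mul, RCLike.norm_conj, RCLike.norm_conj, ha, one_mul]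
    have h1 : ‖phiF f x‖ * ‖a * phiF f x * psiF f x‖ ≤ M * (M * M) :=
      mul_le_mul hφM hAM (norm_nonneg _) hMpos.le
    calc ‖phiF f x‖ * ‖a * phiF f x * psiF f x‖ * ‖mF f x‖
        ≤ M * (M * M) * ‖mF f x‖ := mul_le_mul_of_nonneg_right h1 hmnn
      _ = M ^ 3 * ‖mF f x‖ := by ring
  have b2 : -(a * (a * phiF f x * psiF f x) * mF f x * psiF f x).re
      ≤ M ^ 3 * ‖mF f x‖ := by
    refine (negreLe _).trans ?_
    rw [norm_mul, norm_mul, norm_mul, ha, one_mul]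
    have h1 : ‖a * phiF f x * psiF f x‖ * ‖mF f x‖ ≤ M * M * ‖mF f x‖ :=
      mul_le_mul_of_nonneg_right hAM hmnn
    calc ‖a * phiF f x * psiF f x‖ * ‖mF f x‖ * ‖psiF f x‖
        ≤ (M * M * ‖mF f x‖) * M := by
          refine mul_le_mul h1 hψM (norm_nonneg _) ?_
          positivity
      _ = M ^ 3 * ‖mF f x‖ := by ring
  have b3 : 2 * JF a f x * (a * mF f x * psiF f x).re ≤ 2 * (M ^ 3 * ‖mF f x‖) := by
    have h1 : JF a f x * (a * mF f x * psiF f x).re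
        ≤ |JF a f x| * |(a * mF f x * psiF f x).re| := by
      exact (le_abs_self _).trans (le_of_eq (abs_mul _ _))
    have h2 : |(a * mF f x * psiF f x).re| ≤ ‖mF f x‖ * M := by
      refine (absreLe _).trans ?_
      rw [norm_mul, norm_mul, ha, one_mul]
      exact mul_le_mul_of_nonneg_left hψM (norm_nonneg _)
    have h3 : |JF a f x| * |(a * mF f x * psiF f x).re| ≤ (M * M) * (‖mF f x‖ * M) := by
      refine mul_le_mul hJM h2 (abs_nonneg _) ?_
      positivity
    nlinarith
  have b4 : -(a * (starRingEnd ℂ) (mF f x) * P).re ≤ M ^ 3 * ‖mF f x‖ := by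
    refine (negreLe _).trans ?_
    rw [norm_mul, norm_mul, RCLike.norm_conj, ha, one_mul]
    calc ‖mF f x‖ * ‖P‖ ≤ ‖mF f x‖ * (M * M * M) :=
          mul_le_mul_of_nonneg_left hPM hmnn
      _ = M ^ 3 * ‖mF f x‖ := by ring
  have b5 : -(a * mF f x * (starRingEnd ℂ) N).re ≤ M ^ 3 * ‖mF f x‖ := by
    refine (negreLe _).trans ?_
    rw [norm_mul, norm_mul, RCLike.norm_conj, ha, one_mul]
    calc ‖mF f x‖ * ‖N‖ ≤ ‖mF f x‖ * (M * M * M) :=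
          mul_le_mul_of_nonneg_left hNM hmnn
      _ = M ^ 3 * ‖mF f x‖ := by ring
  have hnn : (0:ℝ) ≤ M ^ 3 * ‖mF f x‖ := by positivity
  rw [hE, slm x]
  linarith
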